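/- (Corollary to Theorem 2.1, q-case: covariance of the q-trinomial distribution of the first kind.) Let n ≥ 1 be a natural number and α₁, α₂ ∈ (0,1). Define E₁ := ∑_{y₁+y₂≤n} [y₁]_q·f(y₁,y₂), E₂ := ∑_{y₁+y₂≤n} [y₂]_q·f(y₁,y₂), and E₁₂ := ∑_{y₁+y₂≤n} [y₁]_q·[y₂]_q·f(y₁,y₂), each sum ranging over pairs of natural numbers (y₁,y₂) with y₁ + y₂ ≤ n. Then the covariance satisfies E₁₂ − E₁·E₂ = α₁·α₂·[n]_q·([n−1]_q − [n]_q) / ( (1+α₁)·(1+α₂)·(1+α₁·q^{n−1}) ). -/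

import Mathlib

open Finset

/-- q-integer `[k]_q = (1 - q^k)/(1 - q)`. -/
noncomputable def qInt (q : ℝ) (k : ℤ) : ℝ := (1 - q ^ k) / (1 - q)

/-- q-factorial `[n]_q! = ∏_{i=1}^n [i]_q`. -/
noncomputable def qFact (q : ℝ) (n : ℕ) : ℝ := ∏ i ∈ Finset.Icc 1 n, qInt q (i : ℤ)

/-- q-binomial coefficient `C_q(n,k)`. -/
noncomputable def qBinom (q : ℝ) (n k : ℕ) : ℝ := qFact q n / (qFact q k * qFact q (n - k))

/-- q-falling factorial `[u]_{m,q} = ∏_{i=1}^m [u-i+1]_q`. -/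
noncomputable def qFall (q : ℝ) (u : ℤ) (m : ℕ) : ℝ := ∏ i ∈ Finset.Icc 1 m, qInt q (u - (i : ℤ) + 1)

/-- `[k]_{q⁻¹} = q^{1-k} · [k]_q`. -/
noncomputable def qIntInv (q : ℝ) (k : ℤ) : ℝ := q ^ (1 - k) * qInt q k

/-- `[u]_{m,q⁻¹} = ∏_{i=1}^m [u-i+1]_{q⁻¹}`. -/
noncomputable def qFallInv (q : ℝ) (u : ℤ) (m : ℕ) : ℝ := ∏ i ∈ Finset.Icc 1 m, qIntInv q (u - (i : ℤ) + 1)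

/-- `b(k) = k(k-1)/2`. -/
def bb (k : ℕ) : ℕ := k * (k - 1) / 2

/-- `⟨1 ⊕ α⟩_m = ∏_{i=1}^m (1 + α q^{i-1})`. -/
noncomputable def oplus (q α : ℝ) (m : ℕ) : ℝ := ∏ i ∈ Finset.Icc 1 m, (1 + α * q ^ (i - 1))

/-- `⟨1 ⊖ β⟩_m = ∏_{i=1}^m (1 - β q^{i-1})`. -/
noncomputable def ominus (q β : ℝ) (m : ℕ) : ℝ := ∏ i ∈ Finset.Icc 1 m, (1 - β * q ^ (i - 1))

/-- q-trinomial coefficient `T_q(n; x₁, x₂)`. -/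
noncomputable def qTri (q : ℝ) (n x1 x2 : ℕ) : ℝ :=
  qFact q n / (qFact q x1 * qFact q x2 * qFact q (n - x1 - x2))

/-- pmf of the q-trinomial distribution of the first kind. -/
noncomputable def fpmf (q a1 a2 : ℝ) (n y1 y2 : ℕ) : ℝ :=
  qTri q n y1 y2 * a1 ^ y1 * a2 ^ y2 * q ^ (bb y1 + bb y2) /
    (oplus q a1 n * oplus q a2 (n - y1))

section Aux
variable {q : ℝ}

lemma hq_ne' (hq1 : q < 1) : (1 : ℝ) - q ≠ 0 := by
  intro h; have := sub_eq_zero.mp h; linarith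

lemma qInt_cast' (q : ℝ) (k : ℕ) : qInt q (k : ℤ) = (1 - q ^ k) / (1 - q) := by
  simp [qInt, zpow_natCast]

lemma qInt_pos' (hq0 : 0 < q) (hq1 : q < 1) {k : ℕ} (hk : k ≠ 0) : 0 < qInt q (k : ℤ) := by
  rw [qInt_cast']
  have h1 : q ^ k < 1 := pow_lt_one₀ hq0.le hq1 hk
  exact div_pos (by linarith) (by linarith)

lemma qFact_pos' (hq0 : 0 < q) (hq1 : q < 1) (n : ℕ) : 0 < qFact q n := by
  refine Finset.prod_pos fun i hi => ?_
  exact qInt_pos' hq0 hq1 (by have := (Finset.mem_Icc.mp hi).1; omega)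

lemma qFact_succ' (n : ℕ) : qFact q (n + 1) = qFact q n * ((1 - q ^ (n + 1)) / (1 - q)) := by
  rw [qFact, Finset.prod_Icc_succ_top (by omega : 1 ≤ n + 1), ← qInt_cast' q (n + 1)]
  rfl

lemma qBinom_zero' (hq0 : 0 < q) (hq1 : q < 1) (n : ℕ) : qBinom q n 0 = 1 := by
  have h0 : qFact q 0 = 1 := by simp [qFact]
  rw [qBinom, h0, Nat.sub_zero, one_mul, div_self (qFact_pos' hq0 hq1 n).ne']

lemma qBinom_self' (hq0 : 0 < q) (hq1 : q < 1) (n : ℕ) : qBinom q n n = 1 := by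
  have h0 : qFact q 0 = 1 := by simp [qFact]
  rw [qBinom, Nat.sub_self, h0, mul_one, div_self (qFact_pos' hq0 hq1 n).ne']

lemma bb_succ' (x : ℕ) : bb (x + 1) = bb x + x := by
  have h1 : bb x = x.choose 2 := (Nat.choose_two_right x).symm
  have h2 : bb (x + 1) = (x + 1).choose 2 := (Nat.choose_two_right (x + 1)).symm
  rw [h1, h2, Nat.choose_succ_succ, Nat.choose_one_right, Nat.add_comm]

lemma qBinom_pascal' (hq0 : 0 < q) (hq1 : q < 1) {m x : ℕ} (hx : x < m) :
    qBinom q (m + 1) (x + 1) = qBinom q m (x + 1) + q ^ (m - x) * qBinom q m x := by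
  obtain ⟨d, rfl⟩ := Nat.exists_eq_add_of_le hx
  have h1 : x + 1 + d - (x + 1) = d := by omega
  have h2 : x + 1 + d + 1 - (x + 1) = d + 1 := by omega
  have h3 : x + 1 + d - x = d + 1 := by omega
  rw [qBinom, qBinom, qBinom, h1, h2, h3]
  rw [show x + 1 + d + 1 = (x + 1 + d) + 1 by omega, qFact_succ' (x + 1 + d),
      show x + 1 + d = (x + d) + 1 by omega, qFact_succ' (x + d),
      qFact_succ' d, qFact_succ' x]
  have hFx := (qFact_pos' hq0 hq1 x).ne'
  have hFd := (qFact_pos' hq0 hq1 d).ne'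
  have hFm := (qFact_pos' hq0 hq1 (x + d)).ne'
  have hq := hq_ne' hq1
  have hIx : (1 : ℝ) - q ^ (x + 1) ≠ 0 := by
    have : q ^ (x + 1) < 1 := pow_lt_one₀ hq0.le hq1 (by omega); linarith
  have hId : (1 : ℝ) - q ^ (d + 1) ≠ 0 := by
    have : q ^ (d + 1) < 1 := pow_lt_one₀ hq0.le hq1 (by omega); linarith
  have hIm : (1 : ℝ) - q ^ (x + d + 1) ≠ 0 := by
    have : q ^ (x + d + 1) < 1 := pow_lt_one₀ hq0.le hq1 (by omega); linarith
  field_simp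
  ring

lemma master' (hq0 : 0 < q) (hq1 : q < 1) (f : ℕ → ℝ) (η : ℝ) (m : ℕ) :
    ∑ x ∈ range (m + 2), f x * qBinom q (m + 1) x * η ^ x * q ^ (bb x)
      = (∑ x ∈ range (m + 1), f x * qBinom q m x * η ^ x * q ^ (bb x))
        + η * q ^ m * ∑ x ∈ range (m + 1), f (x + 1) * qBinom q m x * η ^ x * q ^ (bb x) := by
  rw [Finset.sum_range_succ' (fun x => f x * qBinom q (m + 1) x * η ^ x * q ^ (bb x)) (m + 1)]
  rw [Finset.sum_range_succ (fun x => f (x + 1) * qBinom q (m + 1) (x + 1) * η ^ (x + 1) * q ^ (bb (x + 1))) m]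
  have hsplit : ∀ x ∈ range m,
      f (x + 1) * qBinom q (m + 1) (x + 1) * η ^ (x + 1) * q ^ (bb (x + 1))
      = f (x + 1) * qBinom q m (x + 1) * η ^ (x + 1) * q ^ (bb (x + 1))
        + η * q ^ m * (f (x + 1) * qBinom q m x * η ^ x * q ^ (bb x)) := by
    intro x hx
    rw [qBinom_pascal' hq0 hq1 (mem_range.mp hx), bb_succ']
    obtain ⟨d, hd⟩ : ∃ d, m = x + d := ⟨m - x, by have := mem_range.mp hx; omega⟩
    subst hd
    rw [show x + d - x = d from by omega]
    ring
  rw [Finset.sum_congr rfl hsplit, Finset.sum_add_distrib, ← Finset.mul_sum]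
  have htop : f (m + 1) * qBinom q (m + 1) (m + 1) * η ^ (m + 1) * q ^ (bb (m + 1))
      = η * q ^ m * (f (m + 1) * qBinom q m m * η ^ m * q ^ (bb m)) := by
    rw [qBinom_self' hq0 hq1, qBinom_self' hq0 hq1, bb_succ']
    ring
  rw [htop]
  rw [Finset.sum_range_succ (fun x => f (x + 1) * qBinom q m x * η ^ x * q ^ (bb x)) m,
      Finset.sum_range_succ' (fun x => f x * qBinom q m x * η ^ x * q ^ (bb x)) m]
  rw [qBinom_zero' hq0 hq1, qBinom_zero' hq0 hq1]
  ring

lemma qInt_succ_nat' (hq1 : q < 1) (x : ℕ) :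
    qInt q ((x + 1 : ℕ) : ℤ) = 1 + q * qInt q (x : ℤ) := by
  rw [qInt_cast', qInt_cast']
  have h := hq_ne' hq1
  field_simp
  ring

lemma qInt_mul_eq' (hq1 : q < 1) (x : ℕ) : (1 - q) * qInt q (x : ℤ) = 1 - q ^ x := by
  rw [qInt_cast', mul_comm, div_mul_eq_mul_div, mul_div_assoc, div_self (hq_ne' hq1), mul_one]

lemma sumS0 (hq0 : 0 < q) (hq1 : q < 1) (η : ℝ) (m : ℕ) :
    ∑ x ∈ range (m + 1), qBinom q m x * η ^ x * q ^ (bb x)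
      = ∏ j ∈ range m, (1 + η * q ^ j) := by
  induction m with
  | zero => simp [qBinom_zero' hq0 hq1, bb]
  | succ m ih =>
    have h := master' hq0 hq1 (fun _ => 1) η m
    simp only [one_mul] at h
    rw [h, ih, prod_range_succ]
    ring

lemma sumS1 (hq0 : 0 < q) (hq1 : q < 1) (η : ℝ) (m : ℕ) :
    (∑ x ∈ range (m + 1), qInt q (x : ℤ) * qBinom q m x * η ^ x * q ^ (bb x)) * (1 + η)
      = η * qInt q (m : ℤ) * ∏ j ∈ range m, (1 + η * q ^ j) := by
  induction m with
  | zero => simp [qInt, qBinom_zero' hq0 hq1, bb]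
  | succ m ih =>
    have h := master' hq0 hq1 (fun x => qInt q (x : ℤ)) η m
    rw [h]
    have hshift : ∑ x ∈ range (m + 1), qInt q ((x + 1 : ℕ) : ℤ) * qBinom q m x * η ^ x * q ^ (bb x)
        = (∑ x ∈ range (m + 1), qBinom q m x * η ^ x * q ^ (bb x))
          + q * ∑ x ∈ range (m + 1), qInt q (x : ℤ) * qBinom q m x * η ^ x * q ^ (bb x) := by
      rw [mul_sum, ← sum_add_distrib]
      refine sum_congr rfl fun x _ => ?_
      rw [qInt_succ_nat' hq1 x]
      ring
    push_cast at hshift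
    push_cast
    rw [hshift, sumS0 hq0 hq1 η m, prod_range_succ]
    have hsucc : qInt q ((m : ℤ) + 1) = 1 + q * qInt q (m : ℤ) := by
      have := qInt_succ_nat' hq1 (q := q) m; push_cast at this; exact this
    rw [hsucc]
    have hK : (1 - q) * qInt q (m : ℤ) = 1 - q ^ m := qInt_mul_eq' hq1 m
    set S1m := ∑ x ∈ range (m + 1), qInt q (x : ℤ) * qBinom q m x * η ^ x * q ^ (bb x)
    set P := ∏ j ∈ range m, (1 + η * q ^ j)
    linear_combination (1 + η * q * q ^ m) * ih + (η * P) * hK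

lemma sumS2 (hq0 : 0 < q) (hq1 : q < 1) (η : ℝ) (m : ℕ) :
    (∑ x ∈ range (m + 1), qInt q (x : ℤ) ^ 2 * qBinom q m x * η ^ x * q ^ (bb x))
        * ((1 + η) * (1 + η * q))
      = η * qInt q (m : ℤ) * (1 + η * q * qInt q (m : ℤ)) * ∏ j ∈ range m, (1 + η * q ^ j) := by
  induction m with
  | zero => simp [qInt, qBinom_zero' hq0 hq1, bb]
  | succ m ih =>
    have h := master' hq0 hq1 (fun x => qInt q (x : ℤ) ^ 2) η m
    rw [h]
    have hshift : ∑ x ∈ range (m + 1), qInt q ((x + 1 : ℕ) : ℤ) ^ 2 * qBinom q m x * η ^ x * q ^ (bb x)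
        = (∑ x ∈ range (m + 1), qBinom q m x * η ^ x * q ^ (bb x))
          + 2 * q * ∑ x ∈ range (m + 1), qInt q (x : ℤ) * qBinom q m x * η ^ x * q ^ (bb x)
          + q ^ 2 * ∑ x ∈ range (m + 1), qInt q (x : ℤ) ^ 2 * qBinom q m x * η ^ x * q ^ (bb x) := by
      rw [mul_sum, mul_sum, ← sum_add_distrib, ← sum_add_distrib]
      refine sum_congr rfl fun x _ => ?_
      rw [qInt_succ_nat' hq1 x]
      ring
    push_cast at hshift
    push_cast
    rw [hshift, sumS0 hq0 hq1 η m, prod_range_succ]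
    have hsucc : qInt q ((m : ℤ) + 1) = 1 + q * qInt q (m : ℤ) := by
      have := qInt_succ_nat' hq1 (q := q) m; push_cast at this; exact this
    rw [hsucc]
    have hK : (1 - q) * qInt q (m : ℤ) = 1 - q ^ m := qInt_mul_eq' hq1 m
    have hS1 := sumS1 hq0 hq1 η m
    set S2m := ∑ x ∈ range (m + 1), qInt q (x : ℤ) ^ 2 * qBinom q m x * η ^ x * q ^ (bb x)
    set S1m := ∑ x ∈ range (m + 1), qInt q (x : ℤ) * qBinom q m x * η ^ x * q ^ (bb x)
    set P := ∏ j ∈ range m, (1 + η * q ^ j)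
    set I := qInt q (m : ℤ)
    linear_combination (1 + η * q ^ m * q ^ 2) * ih + (2 * η * q ^ m * q * (1 + η * q)) * hS1
      + (η * P * (1 + q * η + I * q * η + I * q ^ 2 * η)) * hK

lemma oplus_range (α : ℝ) (m : ℕ) : oplus q α m = ∏ j ∈ range m, (1 + α * q ^ j) := by
  induction m with
  | zero => simp [oplus]
  | succ m ih =>
    rw [oplus, Finset.prod_Icc_succ_top (by omega : 1 ≤ m + 1), ← oplus, ih, prod_range_succ]
    norm_num

lemma oplus_pos (hq0 : 0 < q) {α : ℝ} (hα : 0 < α) (m : ℕ) : 0 < oplus q α m := by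
  refine Finset.prod_pos fun i _ => ?_
  positivity

lemma qTri_split (hq0 : 0 < q) (hq1 : q < 1) (n y1 y2 : ℕ) :
    qTri q n y1 y2 = qBinom q n y1 * qBinom q (n - y1) y2 := by
  rw [qTri, qBinom, qBinom]
  have h1 := (qFact_pos' hq0 hq1 (n - y1)).ne'
  have h2 := (qFact_pos' hq0 hq1 y1).ne'
  have h3 := (qFact_pos' hq0 hq1 y2).ne'
  have h4 := (qFact_pos' hq0 hq1 (n - y1 - y2)).ne'
  field_simp

end Aux

theorem stmt4 (q : ℝ) (hq0 : 0 < q) (hq1 : q < 1) (n : ℕ) (hn : 1 ≤ n) (α1 α2 : ℝ)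
    (hα1 : 0 < α1) (hα1' : α1 < 1) (hα2 : 0 < α2) (hα2' : α2 < 1) :
    (∑ y1 ∈ Finset.range (n + 1), ∑ y2 ∈ Finset.range (n - y1 + 1),
        qInt q (y1 : ℤ) * qInt q (y2 : ℤ) * fpmf q α1 α2 n y1 y2)
    - (∑ y1 ∈ Finset.range (n + 1), ∑ y2 ∈ Finset.range (n - y1 + 1),
        qInt q (y1 : ℤ) * fpmf q α1 α2 n y1 y2)
      * (∑ y1 ∈ Finset.range (n + 1), ∑ y2 ∈ Finset.range (n - y1 + 1),
        qInt q (y2 : ℤ) * fpmf q α1 α2 n y1 y2)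
      = α1 * α2 * qInt q (n : ℤ) * (qInt q ((n : ℤ) - 1) - qInt q (n : ℤ)) /
        ((1 + α1) * (1 + α2) * (1 + α1 * q ^ (n - 1))) := by
  have hq := hq_ne' hq1
  have hα1p : (0:ℝ) < 1 + α1 := by linarith
  have hα2p : (0:ℝ) < 1 + α2 := by linarith
  have hqn1 : (0:ℝ) < 1 + α1 * q ^ (n - 1) := by positivity
  have hD1pos : 0 < oplus q α1 n := oplus_pos hq0 hα1 n
  -- weight functions
  set w1 : ℕ → ℝ := fun y1 => qBinom q n y1 * α1 ^ y1 * q ^ (bb y1) with hw1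
  set D1 : ℝ := oplus q α1 n with hD1def
  -- inner-sum reduction
  have hfp : ∀ y1 y2 : ℕ, fpmf q α1 α2 n y1 y2
      = (w1 y1 / (D1 * oplus q α2 (n - y1)))
        * (qBinom q (n - y1) y2 * α2 ^ y2 * q ^ (bb y2)) := by
    intro y1 y2
    rw [fpmf, qTri_split hq0 hq1, pow_add, hw1]
    ring
  have hinner0 : ∀ y1 : ℕ, ∑ y2 ∈ Finset.range (n - y1 + 1), fpmf q α1 α2 n y1 y2
      = w1 y1 / D1 := by
    intro y1
    have h2pos := (oplus_pos hq0 hα2 (n - y1)).ne'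
    calc ∑ y2 ∈ Finset.range (n - y1 + 1), fpmf q α1 α2 n y1 y2
        = (w1 y1 / (D1 * oplus q α2 (n - y1)))
            * ∑ y2 ∈ Finset.range (n - y1 + 1), qBinom q (n - y1) y2 * α2 ^ y2 * q ^ (bb y2) := by
          rw [mul_sum]; exact sum_congr rfl fun y2 _ => hfp y1 y2
      _ = (w1 y1 / (D1 * oplus q α2 (n - y1))) * oplus q α2 (n - y1) := by
          rw [sumS0 hq0 hq1 α2 (n - y1), oplus_range]
      _ = w1 y1 / D1 := by field_simp
  have hinner1 : ∀ y1 : ℕ, ∑ y2 ∈ Finset.range (n - y1 + 1),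
        qInt q (y2 : ℤ) * fpmf q α1 α2 n y1 y2
      = (α2 * qInt q ((n - y1 : ℕ) : ℤ) / (1 + α2)) * (w1 y1 / D1) := by
    intro y1
    have h2pos := (oplus_pos hq0 hα2 (n - y1)).ne'
    have hS1 := sumS1 hq0 hq1 α2 (n - y1)
    calc ∑ y2 ∈ Finset.range (n - y1 + 1), qInt q (y2 : ℤ) * fpmf q α1 α2 n y1 y2
        = (w1 y1 / (D1 * oplus q α2 (n - y1)))
            * ∑ y2 ∈ Finset.range (n - y1 + 1),
                qInt q (y2 : ℤ) * qBinom q (n - y1) y2 * α2 ^ y2 * q ^ (bb y2) := by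
          rw [mul_sum]
          refine sum_congr rfl fun y2 _ => ?_
          rw [hfp y1 y2]; ring
      _ = (α2 * qInt q ((n - y1 : ℕ) : ℤ) / (1 + α2)) * (w1 y1 / D1) := by
          rw [← oplus_range (q := q) α2 (n - y1)] at hS1
          have hs : ∑ y2 ∈ Finset.range (n - y1 + 1),
              qInt q (y2 : ℤ) * qBinom q (n - y1) y2 * α2 ^ y2 * q ^ (bb y2)
              = α2 * qInt q ((n - y1 : ℕ) : ℤ) * oplus q α2 (n - y1) / (1 + α2) := by
            field_simp
            linarith [hS1]
          rw [hs]
          field_simp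
  -- notation for closed forms
  set N : ℝ := qInt q (n : ℤ) with hN
  set O : ℝ := ∏ j ∈ range (n - 1), (1 + α1 * q ^ j) with hO
  have hOpos : 0 < O := by rw [hO]; exact Finset.prod_pos fun j _ => by positivity
  have hqq : q ^ n = q ^ (n - 1) * q := by
    rw [← pow_succ]; congr 1; omega
  have hPn : (∏ j ∈ range n, (1 + α1 * q ^ j)) = O * (1 + α1 * q ^ (n - 1)) := by
    have h : n = (n - 1) + 1 := by omega
    rw [hO]
    conv_lhs => rw [h]
    rw [prod_range_succ]
  have hD1 : D1 = O * (1 + α1 * q ^ (n - 1)) := by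
    rw [hD1def, oplus_range, hPn]
  -- outer numerator sums
  have hN0 : ∑ y1 ∈ Finset.range (n + 1), w1 y1 = O * (1 + α1 * q ^ (n - 1)) := by
    rw [← hPn, ← sumS0 hq0 hq1 α1 n]
  have hN1 : (∑ y1 ∈ Finset.range (n + 1), qInt q (y1 : ℤ) * w1 y1) * (1 + α1)
      = α1 * N * (O * (1 + α1 * q ^ (n - 1))) := by
    rw [← hPn, hN, ← sumS1 hq0 hq1 α1 n]
    congr 1
    exact sum_congr rfl fun y1 _ => by rw [hw1]; ring
  -- shifted product for η = α1/q
  have hb : (0:ℝ) < 1 + α1 / q := by positivity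
  have hshiftP : (∏ j ∈ range n, (1 + α1 / q * q ^ j)) = (1 + α1 / q) * O := by
    obtain ⟨m, hm⟩ : ∃ m, n = m + 1 := ⟨n - 1, by omega⟩
    rw [hm, prod_range_succ' (fun j => 1 + α1 / q * q ^ j) m]
    rw [hO, show n - 1 = m from by omega]
    rw [show (1 + α1 / q * q ^ 0) = 1 + α1 / q from by norm_num]
    rw [mul_comm]
    congr 1
    refine prod_congr rfl fun j _ => ?_
    rw [pow_succ]
    field_simp
  -- per-term q^(n-y1) conversion
  have hterm : ∀ g : ℕ → ℝ, ∀ y1 ∈ Finset.range (n + 1),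
      g y1 * q ^ (n - y1) * w1 y1
      = q ^ n * (g y1 * qBinom q n y1 * (α1 / q) ^ y1 * q ^ (bb y1)) := by
    intro g y1 hy1
    have hy1n : y1 ≤ n := by have := mem_range.mp hy1; omega
    have hpow : q ^ (n - y1) * q ^ y1 = q ^ n := by
      rw [← pow_add]; congr 1; omega
    have hqy : (q : ℝ) ^ y1 ≠ 0 := by positivity
    rw [hw1, div_pow]
    field_simp
    linear_combination (g y1 * qBinom q n y1) * hpow
  have hU : ∑ y1 ∈ Finset.range (n + 1), qInt q (y1 : ℤ) * q ^ (n - y1) * w1 y1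
      = q ^ (n - 1) * α1 * N * O := by
    rw [sum_congr rfl (hterm (fun y1 => qInt q (y1 : ℤ))), ← mul_sum]
    have hS1 := sumS1 hq0 hq1 (α1 / q) n
    rw [hshiftP] at hS1
    have hsum : ∑ x ∈ range (n + 1), qInt q (x : ℤ) * qBinom q n x * (α1 / q) ^ x * q ^ (bb x)
        = α1 / q * N * O := by
      have h2 : (∑ x ∈ range (n + 1), qInt q (x : ℤ) * qBinom q n x * (α1 / q) ^ x * q ^ (bb x))
          * (1 + α1 / q) = (α1 / q * N * O) * (1 + α1 / q) := by rw [hS1, hN]; ring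
      exact mul_right_cancel₀ hb.ne' h2
    rw [hsum, hqq]
    field_simp
  have hW : (∑ y1 ∈ Finset.range (n + 1), qInt q (y1 : ℤ) ^ 2 * q ^ (n - y1) * w1 y1) * (1 + α1)
      = q ^ (n - 1) * α1 * N * (1 + α1 * N) * O := by
    rw [sum_congr rfl (hterm (fun y1 => qInt q (y1 : ℤ) ^ 2)), ← mul_sum]
    have hS2 := sumS2 hq0 hq1 (α1 / q) n
    rw [hshiftP] at hS2
    have hq' : α1 / q * q = α1 := by field_simp
    have hsum : (∑ x ∈ range (n + 1), qInt q (x : ℤ) ^ 2 * qBinom q n x * (α1 / q) ^ x * q ^ (bb x))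
          * (1 + α1)
        = α1 / q * N * (1 + α1 * N) * O := by
      have h2 : ((∑ x ∈ range (n + 1), qInt q (x : ℤ) ^ 2 * qBinom q n x * (α1 / q) ^ x * q ^ (bb x))
          * (1 + α1)) * (1 + α1 / q) = (α1 / q * N * (1 + α1 * N) * O) * (1 + α1 / q) := by
        rw [hN]
        rw [hq'] at hS2
        linear_combination hS2
      exact mul_right_cancel₀ hb.ne' h2
    calc q ^ n * (∑ x ∈ range (n + 1), qInt q (x : ℤ) ^ 2 * qBinom q n x * (α1 / q) ^ x * q ^ (bb x)) * (1 + α1)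
        = q ^ n * ((∑ x ∈ range (n + 1), qInt q (x : ℤ) ^ 2 * qBinom q n x * (α1 / q) ^ x * q ^ (bb x)) * (1 + α1)) := by ring
      _ = q ^ n * (α1 / q * N * (1 + α1 * N) * O) := by rw [hsum]
      _ = q ^ (n - 1) * α1 * N * (1 + α1 * N) * O := by rw [hqq]; field_simp
  -- [n - y1] decomposition
  have hsub : ∀ y1 ∈ Finset.range (n + 1),
      qInt q ((n - y1 : ℕ) : ℤ) = N - q ^ (n - y1) * qInt q (y1 : ℤ) := by
    intro y1 hy1
    have hy1n : y1 ≤ n := by have := mem_range.mp hy1; omega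
    have hpow : q ^ (n - y1) * q ^ y1 = q ^ n := by rw [← pow_add]; congr 1; omega
    rw [hN, qInt_cast', qInt_cast', qInt_cast']
    field_simp
    linear_combination -hpow
  have hN1' : ∑ y1 ∈ Finset.range (n + 1), qInt q (y1 : ℤ) * w1 y1
      = α1 * N * (O * (1 + α1 * q ^ (n - 1))) / (1 + α1) := by
    rw [eq_div_iff hα1p.ne']
    exact hN1
  have hW' : ∑ y1 ∈ Finset.range (n + 1), qInt q (y1 : ℤ) ^ 2 * q ^ (n - y1) * w1 y1
      = q ^ (n - 1) * α1 * N * (1 + α1 * N) * O / (1 + α1) := by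
    rw [eq_div_iff hα1p.ne']
    exact hW
  -- the three double sums
  have hSum1 : (∑ y1 ∈ Finset.range (n + 1), ∑ y2 ∈ Finset.range (n - y1 + 1),
        qInt q (y1 : ℤ) * fpmf q α1 α2 n y1 y2) = α1 * N / (1 + α1) := by
    calc (∑ y1 ∈ Finset.range (n + 1), ∑ y2 ∈ Finset.range (n - y1 + 1),
          qInt q (y1 : ℤ) * fpmf q α1 α2 n y1 y2)
        = ∑ y1 ∈ Finset.range (n + 1), qInt q (y1 : ℤ) * (w1 y1 / D1) := by
          refine sum_congr rfl fun y1 _ => ?_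
          rw [← Finset.mul_sum, hinner0 y1]
      _ = (∑ y1 ∈ Finset.range (n + 1), qInt q (y1 : ℤ) * w1 y1) / D1 := by
          rw [sum_div]
          exact sum_congr rfl fun y1 _ => by ring
      _ = α1 * N / (1 + α1) := by
          rw [hN1', hD1]
          have hOx : O * (1 + α1 * q ^ (n - 1)) ≠ 0 := by positivity
          field_simp
  have hSum2 : (∑ y1 ∈ Finset.range (n + 1), ∑ y2 ∈ Finset.range (n - y1 + 1),
        qInt q (y2 : ℤ) * fpmf q α1 α2 n y1 y2)
      = α2 * N / ((1 + α2) * (1 + α1 * q ^ (n - 1))) := by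
    calc (∑ y1 ∈ Finset.range (n + 1), ∑ y2 ∈ Finset.range (n - y1 + 1),
          qInt q (y2 : ℤ) * fpmf q α1 α2 n y1 y2)
        = ∑ y1 ∈ Finset.range (n + 1), (α2 / ((1 + α2) * D1))
            * (N * w1 y1 - qInt q (y1 : ℤ) * q ^ (n - y1) * w1 y1) := by
          refine sum_congr rfl fun y1 hy1 => ?_
          rw [hinner1 y1, hsub y1 hy1]
          have h2 := hα2p.ne'
          have hD := hD1pos.ne'
          field_simp
      _ = (α2 / ((1 + α2) * D1)) * (N * (∑ y1 ∈ Finset.range (n + 1), w1 y1)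
            - ∑ y1 ∈ Finset.range (n + 1), qInt q (y1 : ℤ) * q ^ (n - y1) * w1 y1) := by
          rw [← Finset.mul_sum, sum_sub_distrib, ← Finset.mul_sum]
      _ = α2 * N / ((1 + α2) * (1 + α1 * q ^ (n - 1))) := by
          rw [hN0, hU, hD1]
          have hOne : O ≠ 0 := hOpos.ne'
          field_simp
          ring
  have hSum12 : (∑ y1 ∈ Finset.range (n + 1), ∑ y2 ∈ Finset.range (n - y1 + 1),
        qInt q (y1 : ℤ) * qInt q (y2 : ℤ) * fpmf q α1 α2 n y1 y2)
      = α1 * α2 * N * (N - q ^ (n - 1)) / ((1 + α1) * (1 + α2) * (1 + α1 * q ^ (n - 1))) := by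
    calc (∑ y1 ∈ Finset.range (n + 1), ∑ y2 ∈ Finset.range (n - y1 + 1),
          qInt q (y1 : ℤ) * qInt q (y2 : ℤ) * fpmf q α1 α2 n y1 y2)
        = ∑ y1 ∈ Finset.range (n + 1), (α2 / ((1 + α2) * D1))
            * (N * (qInt q (y1 : ℤ) * w1 y1) - qInt q (y1 : ℤ) ^ 2 * q ^ (n - y1) * w1 y1) := by
          refine sum_congr rfl fun y1 hy1 => ?_
          have hpull : ∑ y2 ∈ Finset.range (n - y1 + 1),
              qInt q (y1 : ℤ) * qInt q (y2 : ℤ) * fpmf q α1 α2 n y1 y2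
              = qInt q (y1 : ℤ) * ∑ y2 ∈ Finset.range (n - y1 + 1),
                  qInt q (y2 : ℤ) * fpmf q α1 α2 n y1 y2 := by
            rw [Finset.mul_sum]
            exact sum_congr rfl fun y2 _ => by ring
          rw [hpull, hinner1 y1, hsub y1 hy1]
          have h2 := hα2p.ne'
          have hD := hD1pos.ne'
          field_simp
      _ = (α2 / ((1 + α2) * D1))
            * (N * (∑ y1 ∈ Finset.range (n + 1), qInt q (y1 : ℤ) * w1 y1)
              - ∑ y1 ∈ Finset.range (n + 1), qInt q (y1 : ℤ) ^ 2 * q ^ (n - y1) * w1 y1) := by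
          rw [← Finset.mul_sum, sum_sub_distrib, ← Finset.mul_sum]
      _ = α1 * α2 * N * (N - q ^ (n - 1)) / ((1 + α1) * (1 + α2) * (1 + α1 * q ^ (n - 1))) := by
          rw [hN1', hW', hD1]
          have hOne : O ≠ 0 := hOpos.ne'
          field_simp
          ring
  rw [hSum1, hSum2, hSum12]
  have hRn : qInt q ((n : ℤ) - 1) = (1 - q ^ (n - 1)) / (1 - q) := by
    rw [show (n : ℤ) - 1 = ((n - 1 : ℕ) : ℤ) from by push_cast [Nat.cast_sub hn]; ring,
      qInt_cast']
  have hNval : N = (1 - q ^ n) / (1 - q) := by rw [hN, qInt_cast']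
  rw [hRn, hNval, hqq]
  field_simp
  ring
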